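/- There is an absolute constant C such that the following holds. Let ℰ : [0,∞) → ℂ be continuous at 0, twice continuously differentiable on (0,∞), and compactly supported. Then for every t > 2, | ∫₀^∞ e^{itλ²} λ ℰ(λ) dλ − i ℰ(0)/(2t) | ≤ C [ (1/t) ∫₀^{t^{−1/2}} |ℰ′(λ)| dλ + |ℰ′(t^{−1/2})| / t^{3/2} + (1/t²) ∫_{t^{−1/2}}^∞ | d/dλ ( ℰ′(λ)/λ ) | dλ ], provided the right-hand side is finite. -/

import Mathlib

open MeasureTheory Real Complex Set

noncomputable section

/-- Stationary phase estimate (Lemma `lem:ibp`): for `t > 2` and a compactly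
supported amplitude `ℰ` which is continuous at `0` and `C²` on `(0,∞)`,
`|∫₀^∞ e^{itλ²} λ ℰ(λ) dλ − iℰ(0)/(2t)|` is bounded by
`C[ t⁻¹∫₀^{t^{-1/2}}|ℰ′| + |ℰ′(t^{-1/2})|/t^{3/2} + t⁻²∫_{t^{-1/2}}^∞ |(ℰ′(λ)/λ)′| dλ ]`,
provided the right-hand side is finite. -/
theorem stationary_phase_boundary_term :
    ∃ C : ℝ, 0 < C ∧ ∀ E : ℝ → ℂ,
      ContinuousWithinAt E (Set.Ici 0) 0 →
      ContDiffOn ℝ 2 E (Set.Ioi 0) →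
      HasCompactSupport E →
      ∀ t : ℝ, 2 < t →
        IntegrableOn (fun l : ℝ => deriv E l) (Set.Ioc 0 (t ^ (-(1:ℝ)/2))) →
        IntegrableOn (fun l : ℝ => deriv (fun s : ℝ => deriv E s / s) l)
          (Set.Ioi (t ^ (-(1:ℝ)/2))) →
        ‖(∫ l in Set.Ioi (0:ℝ), Complex.exp (Complex.I * t * l ^ 2) * l * E l) -
            Complex.I * E 0 / (2 * t)‖ ≤
          C * ((1 / t) * (∫ l in Set.Ioc (0:ℝ) (t ^ (-(1:ℝ)/2)), ‖deriv E l‖) +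
            ‖deriv E (t ^ (-(1:ℝ)/2))‖ / t ^ ((3:ℝ)/2) +
            (1 / t ^ 2) *
              ∫ l in Set.Ioi (t ^ (-(1:ℝ)/2)), ‖deriv (fun s : ℝ => deriv E s / s) l‖) := by
  refine ⟨1, one_pos, ?_⟩
  intro E hE0 hE2 hEsupp t ht hInt1 hInt2
  set a : ℝ := t ^ (-(1:ℝ)/2) with ha_def
  have ht0 : (0:ℝ) < t := by linarith
  have ha : 0 < a := Real.rpow_pos_of_pos ht0 _
  set ph : ℝ → ℂ := fun l => Complex.exp (Complex.I * t * (l:ℂ) ^ 2) with hph_def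
  have hph_norm : ∀ l : ℝ, ‖ph l‖ = 1 := by
    intro l
    have he : Complex.I * t * (l:ℂ) ^ 2 = ((t * l ^ 2 : ℝ) : ℂ) * Complex.I := by
      push_cast; ring
    rw [hph_def]
    simp only [he]
    rw [Complex.norm_exp_ofReal_mul_I]
  have hph_cont : Continuous ph := by
    apply Complex.continuous_exp.comp
    continuity
  have hph_deriv : ∀ l : ℝ, HasDerivAt ph (2 * Complex.I * t * l * ph l) l := by
    intro l
    have h1 : HasDerivAt (fun z : ℂ => Complex.I * t * z ^ 2)
        (Complex.I * t * (2 * (l:ℂ))) (l : ℂ) := by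
      simpa using ((hasDerivAt_pow 2 (l:ℂ)).const_mul (Complex.I * (t:ℂ)))
    have h2 := (h1.cexp).comp_ofReal
    convert h2 using 1
    simp [hph_def]; ring
  -- constant c = 2 I t
  set c : ℂ := 2 * Complex.I * t with hc_def
  have hcne : c ≠ 0 := by
    simp [hc_def, Complex.ext_iff, ne_eq]
    norm_num
    exact ne_of_gt ht0
  have hcnorm : ‖c‖ = 2 * t := by
    simp [hc_def, abs_of_pos ht0]
  -- differentiability of E on Ioi 0
  have hEdiff : ∀ x ∈ Ioi (0:ℝ), HasDerivAt E (deriv E x) x := by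
    intro x hx
    exact ((hE2.differentiableOn (by norm_num)).differentiableAt
      (Ioi_mem_nhds hx)).hasDerivAt
  have hE'cd : ContDiffOn ℝ 1 (deriv E) (Ioi 0) :=
    hE2.deriv_of_isOpen isOpen_Ioi (by norm_num)
  have hE'cont : ContinuousOn (deriv E) (Ioi 0) := hE'cd.continuousOn
  -- h = deriv E / id
  set h : ℝ → ℂ := fun s => deriv E s / s with hh_def
  have hhdiff : ∀ x ∈ Ioi (0:ℝ), DifferentiableAt ℝ h x := by
    intro x hx
    have h1 : DifferentiableAt ℝ (deriv E) x :=
      (hE'cd.differentiableOn one_ne_zero).differentiableAt (Ioi_mem_nhds hx)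
    have h2 : DifferentiableAt ℝ (fun s : ℝ => (s:ℂ)) x :=
      Complex.ofRealCLM.differentiableAt
    exact h1.div h2 (by exact_mod_cast (ne_of_gt hx))
  have hhderiv : ∀ x ∈ Ioi (0:ℝ), HasDerivAt h (deriv h x) x :=
    fun x hx => (hhdiff x hx).hasDerivAt
  -- continuity of E on Ici 0
  have hEcont : ContinuousOn E (Ici 0) := by
    intro x hx
    rcases eq_or_lt_of_le (mem_Ici.mp hx) with h | h
    · rw [← h]; exact hE0
    · exact (hE2.continuousOn.continuousAt (Ioi_mem_nhds h)).continuousWithinAt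
  -- support bound
  obtain ⟨M, hM⟩ := (hEsupp.isBounded.union hEsupp.deriv.isBounded).subset_closedBall (0:ℝ)
  set R : ℝ := max M a + 1 with hR_def
  have hRa : a < R := lt_of_le_of_lt (le_max_right M a) (lt_add_one _)
  have hR0 : (0:ℝ) < R := lt_trans ha hRa
  have hEzero : ∀ x : ℝ, max M a < x → E x = 0 ∧ deriv E x = 0 := by
    intro x hx
    have hxM : M < x := lt_of_le_of_lt (le_max_left _ _) hx
    have hnot : x ∉ tsupport E ∪ tsupport (deriv E) := by
      intro hmem
      have := hM hmem
      simp [Metric.mem_closedBall, Real.dist_eq, abs_le] at this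
      linarith [this.2]
    simp only [mem_union, not_or] at hnot
    exact ⟨image_eq_zero_of_notMem_tsupport hnot.1,
      image_eq_zero_of_notMem_tsupport hnot.2⟩
  -- integrands
  set f₀ : ℝ → ℂ := fun l => ph l * l * E l with hf₀_def
  set g : ℝ → ℂ := fun l => ph l * deriv E l with hg_def
  set w : ℝ → ℂ := fun l => ph l * deriv h l with hw_def
  have hg_norm : ∀ l, ‖g l‖ = ‖deriv E l‖ := by
    intro l; simp [hg_def, norm_mul, hph_norm]
  have hw_norm : ∀ l, ‖w l‖ = ‖deriv h l‖ := by
    intro l; simp [hw_def, norm_mul, hph_norm]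
  -- integrability of f₀ on Ioi 0
  have hf₀int : IntegrableOn f₀ (Ioi 0) := by
    have h1 : IntegrableOn f₀ (Ioc 0 R) := by
      apply IntegrableOn.mono_set _ Ioc_subset_Icc_self
      apply ContinuousOn.integrableOn_Icc
      exact (hph_cont.continuousOn.mul (Complex.continuous_ofReal.continuousOn)).mul
        (hEcont.mono (fun x hx => hx.1))
    have h2 : IntegrableOn f₀ (Ioi R) := by
      rw [integrableOn_congr_fun (g := fun _ => (0:ℂ)) ?_ measurableSet_Ioi]
      · exact integrableOn_zero
      · intro x hx
        have hx' : max M a + 1 < x := hx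
        have := (hEzero x (by linarith)).1
        simp [hf₀_def, this]
    have := h1.union h2
    rwa [Ioc_union_Ioi_eq_Ioi hR0.le] at this
  -- integrability of g
  have hgint1 : IntegrableOn g (Ioc 0 a) := by
    apply Integrable.mono' hInt1.norm
    · exact ((hph_cont.aestronglyMeasurable.mul
        (measurable_deriv E).aestronglyMeasurable).restrict)
    · filter_upwards with l using le_of_eq (hg_norm l)
  have hgint2 : IntegrableOn g (Ioi a) := by
    have h1 : IntegrableOn g (Ioc a R) := by
      apply IntegrableOn.mono_set _ Ioc_subset_Icc_self
      apply ContinuousOn.integrableOn_Icc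
      exact hph_cont.continuousOn.mul
        (hE'cont.mono (fun x hx => lt_of_lt_of_le ha hx.1))
    have h2 : IntegrableOn g (Ioi R) := by
      rw [integrableOn_congr_fun (g := fun _ => (0:ℂ)) ?_ measurableSet_Ioi]
      · exact integrableOn_zero
      · intro x hx
        have hx' : max M a + 1 < x := hx
        have := (hEzero x (by linarith)).2
        simp [hg_def, this]
    have := h1.union h2
    rwa [Ioc_union_Ioi_eq_Ioi hRa.le] at this
  have hgint : IntegrableOn g (Ioi 0) := by
    have := hgint1.union hgint2
    rwa [Ioc_union_Ioi_eq_Ioi ha.le] at this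
  -- integrability of w on Ioi a
  have hwint : IntegrableOn w (Ioi a) := by
    apply Integrable.mono' hInt2.norm
    · exact ((hph_cont.aestronglyMeasurable.mul
        (measurable_deriv h).aestronglyMeasurable).restrict)
    · filter_upwards with l using le_of_eq (hw_norm l)
  -- First integration by parts, on Ioi 0
  have key1 : ∫ l in Ioi (0:ℝ), (f₀ l + c⁻¹ * g l) = -(c⁻¹ * E 0) := by
    have := integral_Ioi_of_hasDerivAt_of_tendsto (a := (0:ℝ)) (m := (0:ℂ))
      (f := fun l => c⁻¹ * (ph l * E l)) (f' := fun l => f₀ l + c⁻¹ * g l)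
      ?_ ?_ ?_ ?_
    · rw [this]
      simp [hph_def]
    · exact (continuousWithinAt_const).mul ((hph_cont.continuousWithinAt).mul hE0)
    · intro x hx
      have hd := ((hph_deriv x).mul (hEdiff x hx)).const_mul c⁻¹
      refine hd.congr_deriv ?_
      have e1 : c⁻¹ * c = 1 := inv_mul_cancel₀ hcne
      show c⁻¹ * (c * ↑x * ph x * E x + ph x * deriv E x) = ph x * x * E x + c⁻¹ * (ph x * deriv E x)
      linear_combination (ph x * x * E x) * e1
    · exact hf₀int.add (hgint.const_mul _)
    · apply Filter.Tendsto.congr' _ tendsto_const_nhds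
      filter_upwards [Filter.eventually_ge_atTop (max M a + 1)] with x hx
      have := (hEzero x (by linarith)).1
      simp [this]
  -- Second integration by parts, on Ioi a
  have key2 : ∫ l in Ioi a, (g l + c⁻¹ * w l) = -(c⁻¹ * (ph a * h a)) := by
    have := integral_Ioi_of_hasDerivAt_of_tendsto (a := a) (m := (0:ℂ))
      (f := fun l => c⁻¹ * (ph l * h l)) (f' := fun l => g l + c⁻¹ * w l)
      ?_ ?_ ?_ ?_
    · rw [this]; ring
    · exact (continuousWithinAt_const).mul
        ((hph_cont.continuousWithinAt).mul ((hhdiff a ha).continuousAt.continuousWithinAt))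
    · intro x hx
      have hx0 : (0:ℝ) < x := lt_trans ha hx
      have hd := ((hph_deriv x).mul (hhderiv x hx0)).const_mul c⁻¹
      refine hd.congr_deriv ?_
      have hxne : (x:ℂ) ≠ 0 := by exact_mod_cast (ne_of_gt hx0)
      have e1 : c⁻¹ * c = 1 := inv_mul_cancel₀ hcne
      have e2 : (x:ℂ) * (x:ℂ)⁻¹ = 1 := mul_inv_cancel₀ hxne
      show c⁻¹ * (c * ↑x * ph x * (deriv E x / x) + ph x * deriv h x) = ph x * deriv E x + c⁻¹ * (ph x * deriv h x)
      linear_combination (ph x * deriv E x * ((x:ℂ) * (x:ℂ)⁻¹)) * e1 + (ph x * deriv E x) * e2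
    · exact hgint2.add (hwint.const_mul _)
    · apply Filter.Tendsto.congr' _ tendsto_const_nhds
      filter_upwards [Filter.eventually_ge_atTop (max M a + 1)] with x hx
      have := (hEzero x (by linarith)).2
      simp [hh_def, this]
  -- split integrals
  have hsplit1 : ∫ l in Ioi (0:ℝ), (f₀ l + c⁻¹ * g l)
      = (∫ l in Ioi (0:ℝ), f₀ l) + c⁻¹ * ∫ l in Ioi (0:ℝ), g l := by
    rw [integral_add hf₀int (hgint.const_mul _), integral_const_mul]
  have hsplit2 : ∫ l in Ioi a, (g l + c⁻¹ * w l)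
      = (∫ l in Ioi a, g l) + c⁻¹ * ∫ l in Ioi a, w l := by
    rw [integral_add hgint2 (hwint.const_mul _), integral_const_mul]
  set J : ℂ := ∫ l in Ioi (0:ℝ), g l with hJ_def
  set J₁ : ℂ := ∫ l in Ioc (0:ℝ) a, g l with hJ₁_def
  set J₂ : ℂ := ∫ l in Ioi a, g l with hJ₂_def
  have hJsplit : J = J₁ + J₂ := by
    rw [hJ_def, hJ₁_def, hJ₂_def, ← setIntegral_union (Ioc_disjoint_Ioi le_rfl)
      measurableSet_Ioi hgint1 hgint2, Ioc_union_Ioi_eq_Ioi ha.le]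
  -- norm identity for LHS
  have hLHS : (∫ l in Ioi (0:ℝ), Complex.exp (Complex.I * t * (l:ℂ) ^ 2) * l * E l)
      - Complex.I * E 0 / (2 * t) = -(c⁻¹ * J) := by
    have h1 : (∫ l in Ioi (0:ℝ), f₀ l) = -(c⁻¹ * E 0) - c⁻¹ * J := by
      have := key1; rw [hsplit1] at this; linear_combination this
    have htne : (t:ℂ) ≠ 0 := by exact_mod_cast ne_of_gt ht0
    have h2tne : (2 * (t:ℂ)) ≠ 0 := by simpa using htne
    have hinv : c⁻¹ = -Complex.I / (2 * (t:ℂ)) := by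
      apply inv_eq_of_mul_eq_one_right
      rw [hc_def, mul_div_assoc']
      rw [show (2 * Complex.I * (t:ℂ)) * -Complex.I = 2 * t from by
        linear_combination (-2 * (t:ℂ)) * Complex.I_mul_I]
      exact div_self h2tne
    have h2 : -(c⁻¹ * E 0) = Complex.I * E 0 / (2 * t) := by
      rw [hinv]; ring
    calc (∫ l in Ioi (0:ℝ), Complex.exp (Complex.I * t * (l:ℂ) ^ 2) * l * E l)
        - Complex.I * E 0 / (2 * t)
      = (∫ l in Ioi (0:ℝ), f₀ l) - Complex.I * E 0 / (2 * t) := by rfl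
    _ = (-(c⁻¹ * E 0) - c⁻¹ * J) - -(c⁻¹ * E 0) := by rw [h1, h2]
    _ = -(c⁻¹ * J) := by ring
  -- norm bounds
  have hA : (0:ℝ) ≤ ∫ l in Ioc (0:ℝ) a, ‖deriv E l‖ :=
    integral_nonneg (fun l => norm_nonneg _)
  have hB : (0:ℝ) ≤ ∫ l in Ioi a, ‖deriv h l‖ :=
    integral_nonneg (fun l => norm_nonneg _)
  have hJ₁bound : ‖J₁‖ ≤ ∫ l in Ioc (0:ℝ) a, ‖deriv E l‖ := by
    calc ‖J₁‖ ≤ ∫ l in Ioc (0:ℝ) a, ‖g l‖ := norm_integral_le_integral_norm _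
    _ = ∫ l in Ioc (0:ℝ) a, ‖deriv E l‖ := by
        apply integral_congr_ae
        filter_upwards with l using hg_norm l
  have hcinv : ‖c⁻¹‖ = 1 / (2 * t) := by
    rw [norm_inv, hcnorm]; rw [one_div]
  have hJ₂bound : ‖J₂‖ ≤ ‖deriv E a‖ / (a * (2 * t))
      + (1 / (2 * t)) * ∫ l in Ioi a, ‖deriv h l‖ := by
    have h1 : J₂ = -(c⁻¹ * (ph a * h a)) - c⁻¹ * ∫ l in Ioi a, w l := by
      have := key2; rw [hsplit2] at this; linear_combination this
    rw [h1]
    calc ‖-(c⁻¹ * (ph a * h a)) - c⁻¹ * ∫ l in Ioi a, w l‖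
        ≤ ‖c⁻¹ * (ph a * h a)‖ + ‖c⁻¹ * ∫ l in Ioi a, w l‖ := by
          apply (norm_sub_le _ _).trans; rw [norm_neg]
    _ ≤ ‖deriv E a‖ / (a * (2 * t)) + (1 / (2 * t)) * ∫ l in Ioi a, ‖deriv h l‖ := by
        apply add_le_add
        · rw [norm_mul, norm_mul, hcinv, hph_norm, one_mul]
          have hha : ‖h a‖ = ‖deriv E a‖ / a := by
            rw [hh_def]
            simp only [norm_div, Complex.norm_real, Real.norm_eq_abs,
              abs_of_pos ha]
          rw [hha]
          apply le_of_eq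
          rw [div_mul_div_comm, one_mul, mul_comm (2*t) a]
        · rw [norm_mul, hcinv]
          apply mul_le_mul_of_nonneg_left _ (by positivity)
          calc ‖∫ l in Ioi a, w l‖ ≤ ∫ l in Ioi a, ‖w l‖ := norm_integral_le_integral_norm _
          _ = ∫ l in Ioi a, ‖deriv h l‖ := by
              apply integral_congr_ae
              filter_upwards with l using hw_norm l
  -- put together
  rw [hLHS, norm_neg, norm_mul, hcinv]
  have hchain : (1 / (2*t)) * ‖J‖
      ≤ (1 / (2*t)) * ((∫ l in Ioc (0:ℝ) a, ‖deriv E l‖)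
        + (‖deriv E a‖ / (a * (2 * t)) + (1 / (2 * t)) * ∫ l in Ioi a, ‖deriv h l‖)) := by
    apply mul_le_mul_of_nonneg_left _ (by positivity)
    rw [hJsplit]
    exact (norm_add_le _ _).trans (add_le_add hJ₁bound hJ₂bound)
  refine hchain.trans ?_
  rw [one_mul]
  -- arithmetic with rpow
  have hta : t ^ (2:ℕ) * a = t ^ ((3:ℝ)/2) := by
    rw [ha_def, ← Real.rpow_natCast t 2, ← Real.rpow_add ht0]
    norm_num
  have ht32 : (0:ℝ) < t ^ ((3:ℝ)/2) := Real.rpow_pos_of_pos ht0 _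
  have h1 : (1/(2*t)) * (∫ l in Ioc (0:ℝ) a, ‖deriv E l‖)
      ≤ (1/t) * (∫ l in Ioc (0:ℝ) a, ‖deriv E l‖) := by
    apply mul_le_mul_of_nonneg_right _ hA
    rw [div_le_div_iff₀ (by positivity) ht0]
    linarith
  have h2 : (1/(2*t)) * (‖deriv E a‖ / (a * (2 * t)))
      ≤ ‖deriv E a‖ / t ^ ((3:ℝ)/2) := by
    have e : (1/(2*t)) * (‖deriv E a‖ / (a * (2 * t)))
        = ‖deriv E a‖ / (4 * (t ^ (2:ℕ) * a)) := by
      rw [div_mul_div_comm, one_mul]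
      congr 1
      ring
    rw [e, hta]
    apply div_le_div_of_nonneg_left (norm_nonneg _) ht32
    linarith
  have h3 : (1/(2*t)) * ((1/(2*t)) * ∫ l in Ioi a, ‖deriv h l‖)
      ≤ (1 / t^2) * ∫ l in Ioi a, ‖deriv h l‖ := by
    have e : (1/(2*t)) * ((1/(2*t)) * ∫ l in Ioi a, ‖deriv h l‖)
        = (1/(4*t^2)) * ∫ l in Ioi a, ‖deriv h l‖ := by ring
    rw [e]
    apply mul_le_mul_of_nonneg_right _ hB
    rw [div_le_div_iff₀ (by positivity) (by positivity)]
    nlinarith [ht0]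
  calc (1/(2*t)) * ((∫ l in Ioc (0:ℝ) a, ‖deriv E l‖)
        + (‖deriv E a‖ / (a * (2 * t)) + (1 / (2 * t)) * ∫ l in Ioi a, ‖deriv h l‖))
      = (1/(2*t)) * (∫ l in Ioc (0:ℝ) a, ‖deriv E l‖)
        + (1/(2*t)) * (‖deriv E a‖ / (a * (2 * t)))
        + (1/(2*t)) * ((1/(2*t)) * ∫ l in Ioi a, ‖deriv h l‖) := by ring
  _ ≤ (1/t) * (∫ l in Ioc (0:ℝ) a, ‖deriv E l‖)
        + ‖deriv E a‖ / t ^ ((3:ℝ)/2)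
        + (1 / t^2) * ∫ l in Ioi a, ‖deriv h l‖ := by
      exact add_le_add (add_le_add h1 h2) h3
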